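/- arXiv:1710.05892 — 3 statements merged into one kernel-verified Lean document; each statement's English description precedes it below -/
import Mathlib

section
/- Let P_Hardy be the behaviour in the (2,2,2,2) Bell scenario determined by ⟨A₀⟩ = ⟨B₀⟩ = 5 − 2√5, ⟨A₁⟩ = ⟨B₁⟩ = √5 − 2, ⟨A₀B₀⟩ = 6√5 − 13, ⟨A₀B₁⟩ = ⟨A₁B₀⟩ = 3√5 − 6, ⟨A₁B₁⟩ = 2√5 − 5 (probabilities recovered via P(ab|xy) = (1 + (−1)^a⟨A_x⟩ + (−1)^b⟨B_y⟩ + (−1)^{a+b}⟨A_xB_y⟩)/4). Then for every Bell function B ∈ ℝ^16 such that B·P_Hardy = max_{P∈Q} B·P, there exists a local behaviour P_L ∈ L with B·P_L = max_{P∈Q} B·P; in particular β_L(B) = β_Q(B) for every such B, and since P_Hardy ∉ L, the Hardy point P_Hardy is not an exposed point of Q. -/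
open Matrix Kronecker ComplexOrder BigOperators

/-- A behaviour in the (2,2,2,2) Bell scenario: `P a b x y = P(ab|xy)`. -/
abbrev Behaviour : Type := Fin 2 → Fin 2 → Fin 2 → Fin 2 → ℝ

/-- `P` admits a quantum realisation of local dimension `d`. -/
def HasRealisation (d : ℕ) (P : Behaviour) : Prop :=
  ∃ (ρ : Matrix (Fin d × Fin d) (Fin d × Fin d) ℂ)
    (E F : Fin 2 → Fin 2 → Matrix (Fin d) (Fin d) ℂ),
    ρ.PosSemidef ∧ ρ.trace = 1 ∧
    (∀ x a, (E x a).PosSemidef) ∧ (∀ y b, (F y b).PosSemidef) ∧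
    (∀ x, ∑ a, E x a = 1) ∧ (∀ y, ∑ b, F y b = 1) ∧
    ∀ a b x y, (P a b x y : ℂ) = ((E x a ⊗ₖ F y b) * ρ).trace

def Qfinite : Set Behaviour := {P | ∃ d : ℕ, 0 < d ∧ HasRealisation d P}

def Q : Set Behaviour := closure Qfinite

def detBehaviour (f g : Fin 2 → Fin 2) : Behaviour :=
  fun a b x y => if a = f x ∧ b = g y then 1 else 0

def L : Set Behaviour := convexHull ℝ {P | ∃ f g, P = detBehaviour f g}

def NS : Set Behaviour :=
  {P | (∀ a b x y, 0 ≤ P a b x y) ∧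
       (∀ x y : Fin 2, ∑ a : Fin 2, ∑ b : Fin 2, P a b x y = 1) ∧
       (∀ (a x y y' : Fin 2), ∑ b : Fin 2, P a b x y = ∑ b : Fin 2, P a b x y') ∧
       (∀ (b x x' y : Fin 2), ∑ a : Fin 2, P a b x y = ∑ a : Fin 2, P a b x' y)}

def margA (P : Behaviour) (x : Fin 2) : ℝ :=
  ∑ a : Fin 2, ∑ b : Fin 2, (-1 : ℝ) ^ (a : ℕ) * P a b x 0

def margB (P : Behaviour) (y : Fin 2) : ℝ :=
  ∑ a : Fin 2, ∑ b : Fin 2, (-1 : ℝ) ^ (b : ℕ) * P a b 0 y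

def corr (P : Behaviour) (x y : Fin 2) : ℝ :=
  ∑ a : Fin 2, ∑ b : Fin 2, (-1 : ℝ) ^ ((a : ℕ) + (b : ℕ)) * P a b x y

def chsh (P : Behaviour) : ℝ := corr P 0 0 + corr P 0 1 + corr P 1 0 - corr P 1 1

def bell (B P : Behaviour) : ℝ := ∑ a : Fin 2, ∑ b : Fin 2, ∑ x : Fin 2, ∑ y : Fin 2, B a b x y * P a b x y

noncomputable def beta (B : Behaviour) (S : Set Behaviour) : ℝ := sSup (bell B '' S)

def face (B : Behaviour) (S : Set Behaviour) : Set Behaviour :=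
  {P ∈ S | bell B P = beta B S}

/-- Reconstruct a behaviour from marginals and correlators. -/
noncomputable def fromCorr (mA mB : Fin 2 → ℝ) (c : Fin 2 → Fin 2 → ℝ) : Behaviour :=
  fun a b x y =>
    (1 + (-1 : ℝ) ^ (a : ℕ) * mA x + (-1 : ℝ) ^ (b : ℕ) * mB y
      + (-1 : ℝ) ^ ((a : ℕ) + (b : ℕ)) * c x y) / 4


/-- The Hardy point, given by its marginals and correlators. -/
noncomputable def PHardy : Behaviour :=
  fromCorr ![5 - 2 * Real.sqrt 5, Real.sqrt 5 - 2]
    ![5 - 2 * Real.sqrt 5, Real.sqrt 5 - 2]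
    ![![6 * Real.sqrt 5 - 13, 3 * Real.sqrt 5 - 6],
      ![3 * Real.sqrt 5 - 6, 2 * Real.sqrt 5 - 5]]

namespace HardyNE

lemma trace_conjTranspose_mul_self_nonneg {m n : Type*} [Fintype m] [Fintype n]
    (M : Matrix m n ℂ) : 0 ≤ (Mᴴ * M).trace := by
  rw [Matrix.trace]
  refine Finset.sum_nonneg fun j _ => ?_
  rw [Matrix.diag_apply, Matrix.mul_apply]
  exact Finset.sum_nonneg fun i _ => by
    simpa [Matrix.conjTranspose_apply] using star_mul_self_nonneg (M i j)

lemma kron_conjTranspose {m n p q : Type*} (A : Matrix m n ℂ) (B : Matrix p q ℂ) :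
    (A ⊗ₖ B)ᴴ = Aᴴ ⊗ₖ Bᴴ := by
  ext ⟨i, j⟩ ⟨k, l⟩
  simp [Matrix.conjTranspose_apply, Matrix.kroneckerMap_apply, star_mul']

open scoped MatrixOrder in
lemma trace_kron_mul_nonneg {n m : Type*} [Fintype n] [Fintype m] [DecidableEq n] [DecidableEq m]
    {E : Matrix n n ℂ} {F : Matrix m m ℂ} {ρ : Matrix (n × m) (n × m) ℂ}
    (hE : E.PosSemidef) (hF : F.PosSemidef) (hρ : ρ.PosSemidef) :
    0 ≤ ((E ⊗ₖ F) * ρ).trace := by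
  obtain ⟨Be, rfl⟩ : ∃ B : Matrix n n ℂ, E = Bᴴ * B := CStarAlgebra.nonneg_iff_eq_star_mul_self.mp hE.nonneg
  obtain ⟨Cf, rfl⟩ : ∃ B : Matrix m m ℂ, F = Bᴴ * B := CStarAlgebra.nonneg_iff_eq_star_mul_self.mp hF.nonneg
  obtain ⟨A, rfl⟩ : ∃ B : Matrix (n × m) (n × m) ℂ, ρ = Bᴴ * B := CStarAlgebra.nonneg_iff_eq_star_mul_self.mp hρ.nonneg
  rw [Matrix.mul_kronecker_mul Beᴴ Be Cfᴴ Cf, ← kron_conjTranspose]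
  set M := Be ⊗ₖ Cf with hM
  have e1 : Mᴴ * M * (Aᴴ * A) = (Mᴴ * (M * Aᴴ)) * A := by
    simp only [Matrix.mul_assoc]
  have e2 : A * (Mᴴ * (M * Aᴴ)) = (M * Aᴴ)ᴴ * (M * Aᴴ) := by
    rw [Matrix.conjTranspose_mul, Matrix.conjTranspose_conjTranspose]
    simp only [Matrix.mul_assoc]
  rw [e1, Matrix.trace_mul_comm, e2]
  exact trace_conjTranspose_mul_self_nonneg _

end HardyNE

namespace HardyNE

lemma sum_kron {n m : Type*} [Fintype n] [Fintype m] (E : Fin 2 → Matrix n n ℂ)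
    (F : Fin 2 → Matrix m m ℂ) :
    ((∑ a, E a) ⊗ₖ (∑ b, F b)) = ∑ a : Fin 2, ∑ b : Fin 2, E a ⊗ₖ F b := by
  ext ⟨i, j⟩ ⟨k, l⟩
  simp only [Matrix.kroneckerMap_apply, Matrix.sum_apply, Finset.sum_mul_sum]

lemma qfinite_nonneg {P : Behaviour} (hP : P ∈ Qfinite) (a b x y : Fin 2) :
    0 ≤ P a b x y := by
  obtain ⟨d, -, ρ, E, F, hρ, -, hE, hF, -, -, htr⟩ := hP
  have h0 : (0:ℂ) ≤ ((E x a ⊗ₖ F y b) * ρ).trace :=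
    trace_kron_mul_nonneg (hE x a) (hF y b) hρ
  rw [← htr a b x y] at h0
  exact_mod_cast h0

lemma qfinite_sum_one {P : Behaviour} (hP : P ∈ Qfinite) (x y : Fin 2) :
    ∑ a : Fin 2, ∑ b : Fin 2, P a b x y = 1 := by
  obtain ⟨d, -, ρ, E, F, hρ, hρtr, hE, hF, hEs, hFs, htr⟩ := hP
  have : ((∑ a : Fin 2, ∑ b : Fin 2, P a b x y : ℝ) : ℂ) = 1 := by
    push_cast
    simp only [htr]
    have : ∑ a : Fin 2, ∑ b : Fin 2, ((E x a ⊗ₖ F y b) * ρ).trace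
        = ((∑ a : Fin 2, ∑ b : Fin 2, (E x a ⊗ₖ F y b)) * ρ).trace := by
      rw [Finset.sum_mul, Matrix.trace_sum]
      refine Finset.sum_congr rfl fun a _ => ?_
      rw [Finset.sum_mul, Matrix.trace_sum]
    rw [this, ← sum_kron, hEs, hFs, Matrix.one_kronecker_one, Matrix.one_mul, hρtr]
  exact_mod_cast this

lemma qfinite_le_one {P : Behaviour} (hP : P ∈ Qfinite) (a b x y : Fin 2) :
    P a b x y ≤ 1 := by
  have h := qfinite_sum_one hP x y
  have h1 : P a b x y ≤ ∑ a' : Fin 2, ∑ b' : Fin 2, P a' b' x y := by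
    calc P a b x y ≤ ∑ b' : Fin 2, P a b' x y :=
          Finset.single_le_sum (fun i _ => qfinite_nonneg hP a i x y) (Finset.mem_univ b)
      _ ≤ ∑ a' : Fin 2, ∑ b' : Fin 2, P a' b' x y :=
          Finset.single_le_sum (f := fun a' => ∑ b' : Fin 2, P a' b' x y)
            (fun i _ => Finset.sum_nonneg fun j _ => qfinite_nonneg hP i j x y)
            (Finset.mem_univ a)
  linarith [h1, h.le]

lemma bell_le_of_qfinite (B : Behaviour) {P : Behaviour} (hP : P ∈ Qfinite) :
    bell B P ≤ ∑ a : Fin 2, ∑ b : Fin 2, ∑ x : Fin 2, ∑ y : Fin 2, |B a b x y| := by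
  refine Finset.sum_le_sum fun a _ => Finset.sum_le_sum fun b _ =>
    Finset.sum_le_sum fun x _ => Finset.sum_le_sum fun y _ => ?_
  have h0 := qfinite_nonneg hP a b x y
  have h1 := qfinite_le_one hP a b x y
  calc B a b x y * P a b x y ≤ |B a b x y| * P a b x y := by
        exact mul_le_mul_of_nonneg_right (le_abs_self _) h0
    _ ≤ |B a b x y| * 1 := by
        exact mul_le_mul_of_nonneg_left h1 (abs_nonneg _)
    _ = |B a b x y| := mul_one _

lemma bell_continuous (B : Behaviour) : Continuous (fun P => bell B P) := by
  unfold bell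
  fun_prop

lemma bell_le_of_Q (B : Behaviour) {P : Behaviour} (hP : P ∈ Q) :
    bell B P ≤ ∑ a : Fin 2, ∑ b : Fin 2, ∑ x : Fin 2, ∑ y : Fin 2, |B a b x y| := by
  have hcl : IsClosed {P : Behaviour | bell B P ≤ ∑ a : Fin 2, ∑ b : Fin 2, ∑ x : Fin 2, ∑ y : Fin 2, |B a b x y|} :=
    isClosed_le (bell_continuous B) continuous_const
  exact closure_minimal (fun P hP => bell_le_of_qfinite B hP) hcl hP

lemma bddAbove_bell_Q (B : Behaviour) : BddAbove (bell B '' Q) := by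
  refine ⟨∑ a : Fin 2, ∑ b : Fin 2, ∑ x : Fin 2, ∑ y : Fin 2, |B a b x y|, ?_⟩
  rintro z ⟨P, hP, rfl⟩
  exact bell_le_of_Q B hP

end HardyNE


namespace HardyNE

lemma det_mem_qfinite (f g : Fin 2 → Fin 2) : detBehaviour f g ∈ Qfinite := by
  refine ⟨1, one_pos, 1, fun x a => if a = f x then 1 else 0,
    fun y b => if b = g y then 1 else 0, Matrix.PosSemidef.one, by simp [Matrix.trace],
    ?_, ?_, ?_, ?_, ?_⟩
  · intro x a
    by_cases h : a = f x <;> simp [h, Matrix.PosSemidef.one, Matrix.PosSemidef.zero]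
  · intro y b
    by_cases h : b = g y <;> simp [h, Matrix.PosSemidef.one, Matrix.PosSemidef.zero]
  · intro x
    have : f x = 0 ∨ f x = 1 := by omega
    rcases this with h | h <;> rw [Fin.sum_univ_two] <;> simp [h]
  · intro y
    have : g y = 0 ∨ g y = 1 := by omega
    rcases this with h | h <;> rw [Fin.sum_univ_two] <;> simp [h]
  · intro a b x y
    unfold detBehaviour
    by_cases ha : a = f x <;> by_cases hb : b = g y <;>
      simp [ha, hb, Matrix.one_kronecker_one, Matrix.trace, Matrix.zero_kronecker,
        Matrix.kronecker_zero]

-- linearity of bell in second argument, as convexity of halfspaces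
lemma bell_isLinearMap (B : Behaviour) : IsLinearMap ℝ (fun P : Behaviour => bell B P) := by
  constructor
  · intro P Q'
    unfold bell
    simp only [Pi.add_apply, mul_add, Finset.sum_add_distrib]
  · intro c P
    unfold bell
    simp only [Pi.smul_apply, smul_eq_mul, Finset.mul_sum]
    refine Finset.sum_congr rfl fun a _ => Finset.sum_congr rfl fun b _ =>
      Finset.sum_congr rfl fun x _ => Finset.sum_congr rfl fun y _ => by ring

lemma chsh_isLinearMap : IsLinearMap ℝ chsh := by
  constructor
  · intro P Q'
    unfold chsh corr
    simp only [Pi.add_apply, mul_add, Finset.sum_add_distrib]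
    ring
  · intro c P
    unfold chsh corr
    simp only [Pi.smul_apply, smul_eq_mul, Finset.mul_sum]
    have h : ∀ (x y : Fin 2), ∑ a : Fin 2, ∑ b : Fin 2, (-1:ℝ) ^ ((a:ℕ)+(b:ℕ)) * (c * P a b x y)
        = c * ∑ a : Fin 2, ∑ b : Fin 2, (-1:ℝ) ^ ((a:ℕ)+(b:ℕ)) * P a b x y := by
      intro x y
      rw [Finset.mul_sum]
      refine Finset.sum_congr rfl fun a _ => ?_
      rw [Finset.mul_sum]
      refine Finset.sum_congr rfl fun b _ => by ring
    rw [h, h, h, h]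
    ring

lemma chsh_det (f g : Fin 2 → Fin 2) : chsh (detBehaviour f g) ≤ 2 := by
  have hcorr : ∀ x y : Fin 2, corr (detBehaviour f g) x y
      = (-1:ℝ) ^ ((f x : ℕ) + (g y : ℕ)) := by
    intro x y
    unfold corr detBehaviour
    have hf : f x = 0 ∨ f x = 1 := by omega
    have hg : g y = 0 ∨ g y = 1 := by omega
    rcases hf with h1 | h1 <;> rcases hg with h2 | h2 <;>
      simp [Fin.sum_univ_two, h1, h2] <;> norm_num
  unfold chsh
  rw [hcorr, hcorr, hcorr, hcorr]
  have hf0 : f 0 = 0 ∨ f 0 = 1 := by omega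
  have hf1 : f 1 = 0 ∨ f 1 = 1 := by omega
  have hg0 : g 0 = 0 ∨ g 0 = 1 := by omega
  have hg1 : g 1 = 0 ∨ g 1 = 1 := by omega
  rcases hf0 with h1 | h1 <;> rcases hf1 with h2 | h2 <;>
    rcases hg0 with h3 | h3 <;> rcases hg1 with h4 | h4 <;>
    simp [h1, h2, h3, h4] <;> norm_num

lemma chsh_le_two_of_L {P : Behaviour} (hP : P ∈ L) : chsh P ≤ 2 := by
  have hconv : Convex ℝ {P : Behaviour | chsh P ≤ 2} :=
    convex_halfSpace_le chsh_isLinearMap 2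
  have hsub : {P : Behaviour | ∃ f g, P = detBehaviour f g} ⊆ {P : Behaviour | chsh P ≤ 2} := by
    rintro P ⟨f, g, rfl⟩
    exact chsh_det f g
  exact convexHull_min hsub hconv hP

lemma sqrt5_gt : (2.23 : ℝ) < Real.sqrt 5 := by
  have h : (2.23 : ℝ)^2 < 5 := by norm_num
  nlinarith [Real.sq_sqrt (by norm_num : (5:ℝ) ≥ 0), Real.sqrt_nonneg 5]

lemma sqrt5_lt : Real.sqrt 5 < (2.24 : ℝ) := by
  nlinarith [Real.sq_sqrt (by norm_num : (5:ℝ) ≥ 0), Real.sqrt_nonneg 5]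

lemma chsh_PHardy : chsh PHardy = 10 * Real.sqrt 5 - 20 := by
  have hcorr : ∀ x y : Fin 2, corr PHardy x y =
      (![![6 * Real.sqrt 5 - 13, 3 * Real.sqrt 5 - 6],
        ![3 * Real.sqrt 5 - 6, 2 * Real.sqrt 5 - 5]] : Fin 2 → Fin 2 → ℝ) x y := by
    intro x y
    unfold corr PHardy fromCorr
    rw [Fin.sum_univ_two, Fin.sum_univ_two, Fin.sum_univ_two]
    norm_num
    ring
  rw [chsh, hcorr, hcorr, hcorr, hcorr]
  norm_num [Matrix.cons_val_zero, Matrix.cons_val_one]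
  ring

lemma PHardy_not_local : PHardy ∉ L := by
  intro h
  have h2 := chsh_le_two_of_L h
  rw [chsh_PHardy] at h2
  nlinarith [sqrt5_gt]

end HardyNE


namespace HardyNE

noncomputable section

def rr : ℝ := Real.sqrt 5
def CC : ℝ := Real.sqrt (6 * rr - 13)
def SS : ℝ := Real.sqrt ((14 - 2 * rr) / 11)
def s2 : ℝ := rr - 3

lemma rr_sq : rr ^ 2 = 5 := Real.sq_sqrt (by norm_num)
lemma rr_nonneg : 0 ≤ rr := Real.sqrt_nonneg 5
lemma rr_gt : (2.23 : ℝ) < rr := by nlinarith [rr_sq, rr_nonneg]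
lemma rr_lt : rr < (2.24 : ℝ) := by nlinarith [rr_sq, rr_nonneg]
lemma CC_sq : CC ^ 2 = 6 * rr - 13 := Real.sq_sqrt (by nlinarith [rr_gt])
lemma CC_pos : 0 < CC := Real.sqrt_pos.mpr (by nlinarith [rr_gt])
lemma SS_sq : SS ^ 2 = (14 - 2 * rr) / 11 := Real.sq_sqrt (by nlinarith [rr_lt])
lemma SS_pos : 0 < SS := Real.sqrt_pos.mpr (by nlinarith [rr_lt])
lemma CC_lt_one : CC < 1 := by nlinarith [CC_sq, CC_pos, rr_lt]

def ca (x : Fin 2) : ℝ := if x = 0 then (5 - 2 * rr) / CC else (rr - 2) / CC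
def sa (x : Fin 2) : ℝ := if x = 0 then (12 - 8 * rr) / (11 * SS) else SS
def mval (x : Fin 2) : ℝ := if x = 0 then 5 - 2 * rr else rr - 2
def cval (x y : Fin 2) : ℝ :=
  if x = 0 then (if y = 0 then 6 * rr - 13 else 3 * rr - 6)
  else (if y = 0 then 3 * rr - 6 else 2 * rr - 5)
def kk (x : Fin 2) : ℝ := if x = 0 then SS * (9 + 5 * rr) / 4 else -(SS * (35 + 17 * rr) / 4)
def kpsi : ℝ := (9 + 5 * rr) / 2
def mu : ℝ := -44 / CC

lemma mu_ne : mu ≠ 0 := by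
  unfold mu
  exact div_ne_zero (by norm_num) CC_pos.ne'

lemma ca_pos (x : Fin 2) : 0 < ca x := by
  fin_cases x <;> unfold ca <;> simp only [Fin.isValue, Fin.zero_eta, Fin.mk_one,
    ite_true, ite_false, reduceIte, one_ne_zero] <;>
    exact div_pos (by nlinarith [rr_lt, rr_gt]) CC_pos

lemma hmargin (x : Fin 2) : ca x * CC = mval x := by
  have hC := CC_pos.ne'
  fin_cases x <;> unfold ca mval <;> simp only [Fin.isValue, Fin.zero_eta, Fin.mk_one,
    ite_true, ite_false, reduceIte, one_ne_zero] <;> field_simp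

lemma hnorm1 (x : Fin 2) : ca x ^ 2 + sa x ^ 2 = 1 := by
  have hC := CC_pos.ne'
  have hS := SS_pos.ne'
  fin_cases x
  · unfold ca sa
    simp only [Fin.isValue, Fin.zero_eta, Fin.mk_one, ite_true, ite_false, reduceIte, one_ne_zero]
    field_simp
    linear_combination ((-580) + (64)*CC^2 + (484)*SS^2) * rr_sq + ((464) + (-121)*SS^2 + (-192)*rr) * CC_sq + ((7018) + (-3146)*rr) * SS_sq
  · unfold ca sa
    simp only [Fin.isValue, Fin.zero_eta, Fin.mk_one, ite_true, ite_false, reduceIte, one_ne_zero]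
    field_simp
    linear_combination ((-1/11)) * rr_sq + ((-1) + (1)*SS^2) * CC_sq + ((-13) + (6)*rr) * SS_sq

lemma hnormP : CC ^ 2 + s2 ^ 2 = 1 := by
  unfold s2
  nlinarith [CC_sq, rr_sq]

lemma hcorr (x y : Fin 2) : ca x * ca y + s2 * (sa x * sa y) = cval x y := by
  have hC := CC_pos.ne'
  have hS := SS_pos.ne'
  fin_cases x <;> fin_cases y
  · unfold ca sa cval s2
    simp only [Fin.isValue, Fin.zero_eta, Fin.mk_one, ite_true, ite_false, reduceIte, one_ne_zero]
    field_simp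
    linear_combination ((3248) + (-384)*CC^2 + (64)*CC^2*rr + (-3872)*SS^2) * rr_sq + ((-2352) + (1573)*SS^2 + (-726)*SS^2*rr + (1040)*rr) * CC_sq + ((-36784) + (16456)*rr) * SS_sq
  · unfold ca sa cval s2
    simp only [Fin.isValue, Fin.zero_eta, Fin.mk_one, ite_true, ite_false, reduceIte, one_ne_zero]
    field_simp
    linear_combination (0) * SS_sq + ((30) + (3)*rr + (-8)*rr^2) * CC_sq + ((100) + (-48)*rr) * rr_sq
  · unfold ca sa cval s2
    simp only [Fin.isValue, Fin.zero_eta, Fin.mk_one, ite_true, ite_false, reduceIte, one_ne_zero]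
    field_simp
    linear_combination (0) * SS_sq + ((30) + (3)*rr + (-8)*rr^2) * CC_sq + ((100) + (-48)*rr) * rr_sq
  · unfold ca sa cval s2
    simp only [Fin.isValue, Fin.zero_eta, Fin.mk_one, ite_true, ite_false, reduceIte, one_ne_zero]
    field_simp
    linear_combination ((-59/11) + (6)*SS^2) * rr_sq + ((5) + (-3)*SS^2 + (1)*SS^2*rr + (-2)*rr) * CC_sq + ((69) + (-31)*rr) * SS_sq

lemma hdm (x : Fin 2) : -(kk x * sa x * CC) - kpsi * s2 * ca x = mu * (mval x - 1) / 4 := by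
  have hC := CC_pos.ne'
  have hS := SS_pos.ne'
  fin_cases x
  · unfold kk sa ca kpsi mu mval s2
    simp only [Fin.isValue, Fin.zero_eta, Fin.mk_one, ite_true, ite_false, reduceIte, one_ne_zero]
    field_simp
    linear_combination (0) * SS_sq + ((-216) + (24)*rr + (80)*rr^2) * CC_sq + ((-2524) + (920)*rr) * rr_sq
  · unfold kk sa ca kpsi mu mval s2
    simp only [Fin.isValue, Fin.zero_eta, Fin.mk_one, ite_true, ite_false, reduceIte, one_ne_zero]
    field_simp
    linear_combination ((70)*CC^2 + (34)*rr*CC^2) * SS_sq + ((980/11) + (336/11)*rr + (-68/11)*rr^2) * CC_sq + ((3604/11) + (-628/11)*rr) * rr_sq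

lemma hdc (x y : Fin 2) :
    kk x * (s2 * (ca x * sa y) - sa x * ca y) + kk y * (s2 * (sa x * ca y) - sa y * ca x)
      + kpsi * (CC * (sa x * sa y)) = mu * (cval x y - 1) / 4 := by
  have hC := CC_pos.ne'
  have hS := SS_pos.ne'
  fin_cases x <;> fin_cases y
  · unfold kk sa ca kpsi mu cval s2
    simp only [Fin.isValue, Fin.zero_eta, Fin.mk_one, ite_true, ite_false, reduceIte, one_ne_zero]
    field_simp
    linear_combination ((-244112) + (136224)*rr + (18832)*rr^2 + (-21824)*rr^3 + (3520)*rr^4) * SS_sq + ((5184) + (-4032)*rr + (-1536)*rr^2 + (1280)*rr^3) * CC_sq + ((75616) + (-60256)*rr + (16128)*rr^2 + (-640)*rr^3) * rr_sq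
  · unfold kk sa ca kpsi mu cval s2
    simp only [Fin.isValue, Fin.zero_eta, Fin.mk_one, ite_true, ite_false, reduceIte, one_ne_zero]
    field_simp
    linear_combination ((880) + (858)*rr + (66)*rr^2 + (-220)*rr^3) * SS_sq + ((432) + (-48)*rr + (-160)*rr^2) * CC_sq + ((3176) + (-2380)*rr + (312)*rr^2) * rr_sq
  · unfold kk sa ca kpsi mu cval s2
    simp only [Fin.isValue, Fin.zero_eta, Fin.mk_one, ite_true, ite_false, reduceIte, one_ne_zero]
    field_simp
    linear_combination ((880) + (858)*rr + (66)*rr^2 + (-220)*rr^3) * SS_sq + ((432) + (-48)*rr + (-160)*rr^2) * CC_sq + ((3176) + (-2380)*rr + (312)*rr^2) * rr_sq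
  · unfold kk sa ca kpsi mu cval s2
    simp only [Fin.isValue, Fin.zero_eta, Fin.mk_one, ite_true, ite_false, reduceIte, one_ne_zero]
    field_simp
    linear_combination ((-1120) + (36)*CC^2 + (296)*rr + (20)*rr*CC^2 + (268)*rr^2 + (-68)*rr^3) * SS_sq + ((504/11) + (208/11)*rr + (-40/11)*rr^2) * CC_sq + ((5608/11) + (-1728/11)*rr + (136/11)*rr^2) * rr_sq

end

end HardyNE

namespace HardyNE

noncomputable section

def uu (x : Fin 2) : ℝ := Real.sqrt ((1 + ca x) / 2)
def vv (x : Fin 2) : ℝ := sa x / (2 * uu x)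
def pp : ℝ := Real.sqrt ((1 + CC) / 2)
def qq : ℝ := s2 / (2 * pp)

lemma uu_pos (x : Fin 2) : 0 < uu x :=
  Real.sqrt_pos.mpr (by nlinarith [ca_pos x])

lemma uu_sq (x : Fin 2) : uu x ^ 2 = (1 + ca x) / 2 :=
  Real.sq_sqrt (by nlinarith [ca_pos x])

lemma uv (x : Fin 2) : uu x * vv x = sa x / 2 := by
  unfold vv
  field_simp [(uu_pos x).ne']

lemma vv_sq (x : Fin 2) : vv x ^ 2 = (1 - ca x) / 2 := by
  have h := hnorm1 x
  have hu := uu_sq x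
  have hup := (uu_pos x).ne'
  unfold vv
  field_simp
  nlinarith [h, hu]

lemma pp_pos : 0 < pp :=
  Real.sqrt_pos.mpr (by nlinarith [CC_pos])

lemma pp_sq : pp ^ 2 = (1 + CC) / 2 :=
  Real.sq_sqrt (by nlinarith [CC_pos])

lemma pq : pp * qq = s2 / 2 := by
  unfold qq
  field_simp [pp_pos.ne']

lemma qq_sq : qq ^ 2 = (1 - CC) / 2 := by
  have h := hnormP
  have hu := pp_sq
  have hup := pp_pos.ne'
  unfold qq
  field_simp
  nlinarith [h, hu]

def bu (x a : Fin 2) : ℝ := if a = 0 then uu x else -(vv x)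
def bv (x a : Fin 2) : ℝ := if a = 0 then vv x else uu x
def eca (x a : Fin 2) : ℝ := if a = 0 then ca x else -(ca x)
def esa (x a : Fin 2) : ℝ := if a = 0 then sa x else -(sa x)

lemma bu_sq (x a : Fin 2) : bu x a ^ 2 = (1 + eca x a) / 2 := by
  unfold bu eca
  by_cases h : a = 0 <;> simp only [h, ite_true, ite_false, reduceIte, if_pos, if_neg] <;>
    [exact uu_sq x; skip]
  rw [neg_pow, vv_sq]
  ring

lemma bv_sq (x a : Fin 2) : bv x a ^ 2 = (1 - eca x a) / 2 := by
  unfold bv eca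
  by_cases h : a = 0 <;> simp only [h, ite_true, ite_false, reduceIte] <;>
    [exact vv_sq x; skip]
  rw [uu_sq]
  ring

lemma bubv (x a : Fin 2) : bu x a * bv x a = esa x a / 2 := by
  unfold bu bv esa
  by_cases h : a = 0 <;> simp only [h, ite_true, ite_false, reduceIte] <;>
    [exact uv x; skip]
  have := uv x
  nlinarith [this]

def rot1 (k α β t : ℝ) : ℝ := ((1 - (k*t)^2) * α - 2*(k*t) * β) / (1 + (k*t)^2)
def rot2 (k α β t : ℝ) : ℝ := (2*(k*t) * α + (1 - (k*t)^2) * β) / (1 + (k*t)^2)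

lemma den_pos (k t : ℝ) : (0:ℝ) < 1 + (k*t)^2 := by positivity

lemma rot1_zero (k α β : ℝ) : rot1 k α β 0 = α := by unfold rot1; norm_num

lemma rot2_zero (k α β : ℝ) : rot2 k α β 0 = β := by unfold rot2; norm_num

lemma rot_norm (k α β t : ℝ) : rot1 k α β t ^ 2 + rot2 k α β t ^ 2 = α^2 + β^2 := by
  unfold rot1 rot2
  have h := (den_pos k t).ne'
  field_simp
  ring

lemma rot1_flip (k α β t : ℝ) : rot1 k (-β) α t = -(rot2 k α β t) := by
  unfold rot1 rot2
  have h := (den_pos k t).ne'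
  field_simp
  ring

lemma rot2_flip (k α β t : ℝ) : rot2 k (-β) α t = rot1 k α β t := by
  unfold rot1 rot2
  have h := (den_pos k t).ne'
  field_simp
  ring

lemma hasDerivAt_rot1 (k α β : ℝ) : HasDerivAt (rot1 k α β) (-(2*k*β)) 0 := by
  have h1 : HasDerivAt (fun t : ℝ => k*t) k 0 := by
    simpa using (hasDerivAt_id (0:ℝ)).const_mul k
  have h2 : HasDerivAt (fun t : ℝ => (k*t)^2) 0 0 := by
    have := h1.fun_pow 2
    norm_num at this
    simpa using this
  have hnum : HasDerivAt (fun t : ℝ => (1-(k*t)^2)*α - 2*(k*t)*β) (-(2*k*β)) 0 := by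
    have h3 : HasDerivAt (fun t : ℝ => (1-(k*t)^2)*α) 0 0 := by
      simpa using ((hasDerivAt_const (0:ℝ) (1:ℝ)).sub h2).mul_const α
    have h4 : HasDerivAt (fun t : ℝ => 2*(k*t)*β) (2*k*β) 0 := by
      have := (h1.const_mul (2:ℝ)).mul_const β
      simpa [mul_assoc] using this
    simpa using h3.fun_sub h4
  have hden : HasDerivAt (fun t : ℝ => 1+(k*t)^2) 0 0 := by
    simpa using (hasDerivAt_const (0:ℝ) (1:ℝ)).fun_add h2
  have hd : (fun t : ℝ => 1+(k*t)^2) 0 ≠ 0 := by norm_num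
  have := hnum.fun_div hden hd
  unfold rot1
  exact this.congr_deriv (by norm_num)

lemma hasDerivAt_rot2 (k α β : ℝ) : HasDerivAt (rot2 k α β) (2*k*α) 0 := by
  have h1 : HasDerivAt (fun t : ℝ => k*t) k 0 := by
    simpa using (hasDerivAt_id (0:ℝ)).const_mul k
  have h2 : HasDerivAt (fun t : ℝ => (k*t)^2) 0 0 := by
    have := h1.fun_pow 2
    norm_num at this
    simpa using this
  have hnum : HasDerivAt (fun t : ℝ => 2*(k*t)*α + (1-(k*t)^2)*β) (2*k*α) 0 := by
    have h3 : HasDerivAt (fun t : ℝ => (1-(k*t)^2)*β) 0 0 := by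
      simpa using ((hasDerivAt_const (0:ℝ) (1:ℝ)).sub h2).mul_const β
    have h4 : HasDerivAt (fun t : ℝ => 2*(k*t)*α) (2*k*α) 0 := by
      have := (h1.const_mul (2:ℝ)).mul_const α
      simpa [mul_assoc] using this
    simpa using h4.fun_add h3
  have hden : HasDerivAt (fun t : ℝ => 1+(k*t)^2) 0 0 := by
    simpa using (hasDerivAt_const (0:ℝ) (1:ℝ)).fun_add h2
  have hd : (fun t : ℝ => 1+(k*t)^2) 0 ≠ 0 := by norm_num
  have := hnum.fun_div hden hd
  unfold rot2
  exact this.congr_deriv (by norm_num)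

end

end HardyNE



namespace HardyNE

/-- generic probability expansion -/
lemma prob_expand {U1 U2 V1 V2 P1 P2 cA sA cB sB cT sT : ℝ}
    (hU1 : U1^2 = (1+cA)/2) (hU2 : U2^2 = (1-cA)/2) (hU : U1*U2 = sA/2)
    (hV1 : V1^2 = (1+cB)/2) (hV2 : V2^2 = (1-cB)/2) (hV : V1*V2 = sB/2)
    (hP1 : P1^2 = (1+cT)/2) (hP2 : P2^2 = (1-cT)/2) (hP : P1*P2 = sT/2) :
    (U1*V1*P1 + U2*V2*P2)^2
      = (1 + cA*cT + cB*cT + (cA*cB + sT*(sA*sB)))/4 := by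
  linear_combination ((2)*P1*P2*V1*V2) * hU + ((1)*P1^2*V1^2) * hU1 + ((1)*P2^2*V2^2) * hU2
    + ((1)*P1*P2*sA) * hV + ((1/2)*P1^2 + (1/2)*P1^2*cA) * hV1
    + ((1/2)*P2^2 + (-1/2)*P2^2*cA) * hV2
    + ((1/2)*sA*sB) * hP + ((1/4) + (1/4)*cA + (1/4)*cA*cB + (1/4)*cB) * hP1
    + ((1/4) + (-1/4)*cA + (1/4)*cA*cB + (-1/4)*cB) * hP2

/-- generic derivative expansion -/
lemma dprob_expand {U1 U2 V1 V2 P1 P2 cA sA cB sB cT sT : ℝ} (kA kB kT : ℝ)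
    (hU1 : U1^2 = (1+cA)/2) (hU2 : U2^2 = (1-cA)/2) (hU : U1*U2 = sA/2)
    (hV1 : V1^2 = (1+cB)/2) (hV2 : V2^2 = (1-cB)/2) (hV : V1*V2 = sB/2)
    (hP1 : P1^2 = (1+cT)/2) (hP2 : P2^2 = (1-cT)/2) (hP : P1*P2 = sT/2) :
    2*(U1*V1*P1 + U2*V2*P2) *
      ((-2*kA*U2)*V1*P1 + U1*(-2*kB*V2)*P1 + U1*V1*(-2*kT*P2)
        + (2*kA*U1)*V2*P2 + U2*(2*kB*V1)*P2 + U2*V2*(2*kT*P1))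
      = kA*(-(sA*cT) - sA*cB + sT*(cA*sB)) + kB*(-(sB*cT) - sB*cA + sT*(sA*cB))
        + kT*(-(sT*cA) - sT*cB + cT*(sA*sB)) := by
  linear_combination
    ((4)*P1*P2*V1^2*kB + (-4)*P1*P2*V2^2*kB + (4)*P1^2*V1*V2*kT + (-4)*P1^2*V1^2*kA + (-4)*P2^2*V1*V2*kT + (4)*P2^2*V2^2*kA) * hU
    + ((4)*P1*P2*V1*V2*kA + (-4)*P1*P2*V1^2*kT + (-4)*P1^2*V1*V2*kB) * hU1
    + ((-4)*P1*P2*V1*V2*kA + (4)*P1*P2*V2^2*kT + (4)*P2^2*V1*V2*kB) * hU2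
    + ((4)*P1*P2*cA*kA + (-2)*P1^2*cA*kB + (-2)*P1^2*kB + (2)*P1^2*kT*sA + (-2)*P2^2*cA*kB + (2)*P2^2*kB + (-2)*P2^2*kT*sA) * hV
    + ((-2)*P1*P2*cA*kT + (2)*P1*P2*kB*sA + (-2)*P1*P2*kT + (-2)*P1^2*kA*sA) * hV1
    + ((-2)*P1*P2*cA*kT + (-2)*P1*P2*kB*sA + (2)*P1*P2*kT + (2)*P2^2*kA*sA) * hV2
    + ((2)*cA*kA*sB + (-2)*cA*kT + (2)*cB*kB*sA + (-2)*cB*kT) * hP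
    + ((-1)*cA*kB*sB + (-1)*cB*kA*sA + (-1)*kA*sA + (-1)*kB*sB + (1)*kT*sA*sB) * hP1
    + ((-1)*cA*kB*sB + (-1)*cB*kA*sA + (1)*kA*sA + (1)*kB*sB + (-1)*kT*sA*sB) * hP2

end HardyNE


namespace HardyNE

noncomputable section

lemma rr_def : Real.sqrt 5 = rr := rfl

lemma hm0 : ca 0 * CC = 5 - 2*rr := by simpa [mval] using hmargin 0
lemma hm1 : ca 1 * CC = rr - 2 := by simpa [mval] using hmargin 1
lemma hc00 : ca 0 * ca 0 + s2 * (sa 0 * sa 0) = 6*rr - 13 := by simpa [cval] using hcorr 0 0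
lemma hc01 : ca 0 * ca 1 + s2 * (sa 0 * sa 1) = 3*rr - 6 := by simpa [cval] using hcorr 0 1
lemma hc10 : ca 1 * ca 0 + s2 * (sa 1 * sa 0) = 3*rr - 6 := by simpa [cval] using hcorr 1 0
lemma hc11 : ca 1 * ca 1 + s2 * (sa 1 * sa 1) = 2*rr - 5 := by simpa [cval] using hcorr 1 1
lemma hdm0 : -(kk 0 * sa 0 * CC) - kpsi * s2 * ca 0 = mu * ((5 - 2*rr) - 1) / 4 := by
  simpa [mval] using hdm 0
lemma hdm1 : -(kk 1 * sa 1 * CC) - kpsi * s2 * ca 1 = mu * ((rr - 2) - 1) / 4 := by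
  simpa [mval] using hdm 1
lemma hdc00 : kk 0 * (s2 * (ca 0 * sa 0) - sa 0 * ca 0) + kk 0 * (s2 * (sa 0 * ca 0) - sa 0 * ca 0)
    + kpsi * (CC * (sa 0 * sa 0)) = mu * ((6*rr - 13) - 1) / 4 := by
  simpa [cval] using hdc 0 0
lemma hdc01 : kk 0 * (s2 * (ca 0 * sa 1) - sa 0 * ca 1) + kk 1 * (s2 * (sa 0 * ca 1) - sa 1 * ca 0)
    + kpsi * (CC * (sa 0 * sa 1)) = mu * ((3*rr - 6) - 1) / 4 := by
  simpa [cval] using hdc 0 1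
lemma hdc10 : kk 1 * (s2 * (ca 1 * sa 0) - sa 1 * ca 0) + kk 0 * (s2 * (sa 1 * ca 0) - sa 0 * ca 1)
    + kpsi * (CC * (sa 1 * sa 0)) = mu * ((3*rr - 6) - 1) / 4 := by
  simpa [cval] using hdc 1 0
lemma hdc11 : kk 1 * (s2 * (ca 1 * sa 1) - sa 1 * ca 1) + kk 1 * (s2 * (sa 1 * ca 1) - sa 1 * ca 1)
    + kpsi * (CC * (sa 1 * sa 1)) = mu * ((2*rr - 5) - 1) / 4 := by
  simpa [cval] using hdc 1 1

lemma buv_norm (x a : Fin 2) : bu x a ^ 2 + bv x a ^ 2 = 1 := by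
  rw [bu_sq, bv_sq]; ring
lemma ppqq_norm : pp ^ 2 + qq ^ 2 = 1 := by rw [pp_sq, qq_sq]; ring

def Gf (t : ℝ) (a b x y : Fin 2) : ℝ :=
  rot1 (kk x) (bu x a) (bv x a) t * rot1 (kk y) (bu y b) (bv y b) t * rot1 kpsi pp qq t
  + rot2 (kk x) (bu x a) (bv x a) t * rot2 (kk y) (bu y b) (bv y b) t * rot2 kpsi pp qq t

def curve (t : ℝ) : Behaviour := fun a b x y => (Gf t a b x y)^2

lemma curve_zero_entry (a b x y : Fin 2) :
    curve 0 a b x y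
      = (1 + eca x a * CC + eca y b * CC + (eca x a * eca y b + s2 * (esa x a * esa y b)))/4 := by
  show (Gf 0 a b x y)^2 = _
  unfold Gf
  rw [rot1_zero, rot1_zero, rot1_zero, rot2_zero, rot2_zero, rot2_zero]
  exact prob_expand (bu_sq x a) (bv_sq x a) (bubv x a) (bu_sq y b) (bv_sq y b) (bubv y b)
    pp_sq qq_sq pq

lemma curve_zero : curve 0 = PHardy := by
  funext a b x y
  rw [curve_zero_entry]
  fin_cases a <;> fin_cases b <;> fin_cases x <;> fin_cases y <;>
    simp only [eca, esa, PHardy, fromCorr, rr_def, Matrix.cons_val_zero, Matrix.cons_val_one,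
      Matrix.head_cons, Fin.isValue, Fin.zero_eta, Fin.mk_one, ite_true, ite_false, reduceIte,
      one_ne_zero, Fin.val_zero, Fin.val_one, pow_zero, pow_one]
  · linear_combination (1/4) * hm0 + (1/4) * hm0 + (1/4) * hc00
  · linear_combination (1/4) * hm0 + (1/4) * hm1 + (1/4) * hc01
  · linear_combination (1/4) * hm1 + (1/4) * hm0 + (1/4) * hc10
  · linear_combination (1/4) * hm1 + (1/4) * hm1 + (1/4) * hc11
  · linear_combination (1/4) * hm0 + (-1/4) * hm0 + (-1/4) * hc00
  · linear_combination (1/4) * hm0 + (-1/4) * hm1 + (-1/4) * hc01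
  · linear_combination (1/4) * hm1 + (-1/4) * hm0 + (-1/4) * hc10
  · linear_combination (1/4) * hm1 + (-1/4) * hm1 + (-1/4) * hc11
  · linear_combination (-1/4) * hm0 + (1/4) * hm0 + (-1/4) * hc00
  · linear_combination (-1/4) * hm0 + (1/4) * hm1 + (-1/4) * hc01
  · linear_combination (-1/4) * hm1 + (1/4) * hm0 + (-1/4) * hc10
  · linear_combination (-1/4) * hm1 + (1/4) * hm1 + (-1/4) * hc11
  · linear_combination (-1/4) * hm0 + (-1/4) * hm0 + (1/4) * hc00
  · linear_combination (-1/4) * hm0 + (-1/4) * hm1 + (1/4) * hc01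
  · linear_combination (-1/4) * hm1 + (-1/4) * hm0 + (1/4) * hc10
  · linear_combination (-1/4) * hm1 + (-1/4) * hm1 + (1/4) * hc11

lemma deriv_entry (a b x y : Fin 2) :
    kk x * (-(esa x a * CC) - esa x a * eca y b + s2 * (eca x a * esa y b))
    + kk y * (-(esa y b * CC) - esa y b * eca x a + s2 * (esa x a * eca y b))
    + kpsi * (-(s2 * eca x a) - s2 * eca y b + CC * (esa x a * esa y b))
    = mu * (PHardy a b x y - detBehaviour (fun _ => 0) (fun _ => 0) a b x y) := by
  fin_cases a <;> fin_cases b <;> fin_cases x <;> fin_cases y <;>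
    simp only [eca, esa, PHardy, fromCorr, detBehaviour, rr_def, Matrix.cons_val_zero,
      Matrix.cons_val_one, Matrix.head_cons, Fin.isValue, Fin.zero_eta, Fin.mk_one, ite_true,
      ite_false, reduceIte, one_ne_zero, Fin.val_zero, Fin.val_one, pow_zero, pow_one,
      and_self, and_true, true_and, and_false, false_and, zero_ne_one]
  · linear_combination (1) * hdm0 + (1) * hdm0 + (1) * hdc00
  · linear_combination (1) * hdm0 + (1) * hdm1 + (1) * hdc01
  · linear_combination (1) * hdm1 + (1) * hdm0 + (1) * hdc10
  · linear_combination (1) * hdm1 + (1) * hdm1 + (1) * hdc11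
  · linear_combination (1) * hdm0 + (-1) * hdm0 + (-1) * hdc00
  · linear_combination (1) * hdm0 + (-1) * hdm1 + (-1) * hdc01
  · linear_combination (1) * hdm1 + (-1) * hdm0 + (-1) * hdc10
  · linear_combination (1) * hdm1 + (-1) * hdm1 + (-1) * hdc11
  · linear_combination (-1) * hdm0 + (1) * hdm0 + (-1) * hdc00
  · linear_combination (-1) * hdm0 + (1) * hdm1 + (-1) * hdc01
  · linear_combination (-1) * hdm1 + (1) * hdm0 + (-1) * hdc10
  · linear_combination (-1) * hdm1 + (1) * hdm1 + (-1) * hdc11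
  · linear_combination (-1) * hdm0 + (-1) * hdm0 + (1) * hdc00
  · linear_combination (-1) * hdm0 + (-1) * hdm1 + (1) * hdc01
  · linear_combination (-1) * hdm1 + (-1) * hdm0 + (1) * hdc10
  · linear_combination (-1) * hdm1 + (-1) * hdm1 + (1) * hdc11

lemma hasDerivAt_curve_entry (a b x y : Fin 2) :
    HasDerivAt (fun t => curve t a b x y)
      (mu * (PHardy a b x y - detBehaviour (fun _ => 0) (fun _ => 0) a b x y)) 0 := by
  have hG : HasDerivAt (fun t => Gf t a b x y)
      (((-(2*(kk x)*(bv x a)) * rot1 (kk y) (bu y b) (bv y b) 0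
          + rot1 (kk x) (bu x a) (bv x a) 0 * -(2*(kk y)*(bv y b))) * rot1 kpsi pp qq 0
        + rot1 (kk x) (bu x a) (bv x a) 0 * rot1 (kk y) (bu y b) (bv y b) 0 * -(2*kpsi*qq))
       + ((2*(kk x)*(bu x a) * rot2 (kk y) (bu y b) (bv y b) 0
          + rot2 (kk x) (bu x a) (bv x a) 0 * (2*(kk y)*(bu y b))) * rot2 kpsi pp qq 0
        + rot2 (kk x) (bu x a) (bv x a) 0 * rot2 (kk y) (bu y b) (bv y b) 0 * (2*kpsi*pp))) 0 := by
    exact (((hasDerivAt_rot1 (kk x) (bu x a) (bv x a)).mul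
        (hasDerivAt_rot1 (kk y) (bu y b) (bv y b))).mul (hasDerivAt_rot1 kpsi pp qq)).add
      (((hasDerivAt_rot2 (kk x) (bu x a) (bv x a)).mul
        (hasDerivAt_rot2 (kk y) (bu y b) (bv y b))).mul (hasDerivAt_rot2 kpsi pp qq))
  have h2 := hG.fun_pow 2
  have hfun : (fun t => curve t a b x y) = fun t => (Gf t a b x y)^2 := rfl
  rw [hfun]
  refine h2.congr_deriv (Eq.symm ?_)
  rw [show Gf 0 a b x y = bu x a * bu y b * pp + bv x a * bv y b * qq by
    unfold Gf; rw [rot1_zero, rot1_zero, rot1_zero, rot2_zero, rot2_zero, rot2_zero]]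
  rw [rot1_zero, rot1_zero, rot1_zero, rot2_zero, rot2_zero, rot2_zero]
  have ve := dprob_expand (kk x) (kk y) kpsi (bu_sq x a) (bv_sq x a) (bubv x a)
    (bu_sq y b) (bv_sq y b) (bubv y b) pp_sq qq_sq pq
  have de := deriv_entry a b x y
  norm_num
  linear_combination (-1 : ℝ) * ve + (-1 : ℝ) * de

end

end HardyNE


namespace HardyNE

noncomputable section

lemma outer_eq {n : Type*} (w : n → ℂ) :
    vecMulVec w (star w) = Matrix.replicateCol (Fin 1) w * (Matrix.replicateCol (Fin 1) w)ᴴ := by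
  ext i j
  simp [Matrix.vecMulVec_apply, Matrix.mul_apply, Matrix.replicateCol_apply, Matrix.conjTranspose_apply]

lemma outer_psd {n : Type*} [Fintype n] (w : n → ℂ) : (vecMulVec w (star w)).PosSemidef := by
  rw [outer_eq]
  exact Matrix.posSemidef_self_mul_conjTranspose _

def wA (t : ℝ) (x a : Fin 2) : Fin 2 → ℂ :=
  ![(rot1 (kk x) (bu x a) (bv x a) t : ℂ), (rot2 (kk x) (bu x a) (bv x a) t : ℂ)]

def psiv (t : ℝ) : Fin 2 × Fin 2 → ℂ := fun i =>
  if i = ((0 : Fin 2), (0 : Fin 2)) then (rot1 kpsi pp qq t : ℂ)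
  else if i = ((1 : Fin 2), (1 : Fin 2)) then (rot2 kpsi pp qq t : ℂ) else 0

lemma trace_psiv (t : ℝ) : (vecMulVec (psiv t) (star (psiv t))).trace = 1 := by
  have hnorm : rot1 kpsi pp qq t * rot1 kpsi pp qq t + rot2 kpsi pp qq t * rot2 kpsi pp qq t
      = 1 := by
    nlinarith [rot_norm kpsi pp qq t, ppqq_norm]
  simp only [Matrix.trace, Matrix.diag_apply, Matrix.vecMulVec_apply, Pi.star_apply,
    Fintype.sum_prod_type, Fin.sum_univ_two, psiv]
  norm_num
  norm_cast

lemma sum_wA (t : ℝ) (x : Fin 2) :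
    ∑ a : Fin 2, vecMulVec (wA t x a) (star (wA t x a)) = 1 := by
  have h1 := rot_norm (kk x) (uu x) (vv x) t
  have h2 : uu x ^ 2 + vv x ^ 2 = 1 := by rw [uu_sq, vv_sq]; ring
  rw [Fin.sum_univ_two]
  ext i j
  fin_cases i <;> fin_cases j <;>
    simp only [Matrix.add_apply, Matrix.vecMulVec_apply, Pi.star_apply, wA, bu, bv,
      Matrix.cons_val_zero, Matrix.cons_val_one, Matrix.head_cons, Fin.isValue, Fin.zero_eta,
      Fin.mk_one, ite_true, ite_false, reduceIte, one_ne_zero, Matrix.one_apply_eq,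
      Matrix.one_apply_ne, ne_eq, Fin.zero_ne_one, not_false_eq_true,
      rot1_flip, rot2_flip, star_neg, Complex.star_def, Complex.conj_ofReal] <;>
    norm_cast <;> (first | ring1 | linarith [h1, h2])

lemma trace_formula (t : ℝ) (a b x y : Fin 2) :
    ((curve t a b x y : ℝ) : ℂ)
      = ((vecMulVec (wA t x a) (star (wA t x a)) ⊗ₖ vecMulVec (wA t y b) (star (wA t y b)))
          * vecMulVec (psiv t) (star (psiv t))).trace := by
  simp only [Matrix.trace, Matrix.diag_apply, Matrix.mul_apply, Matrix.kroneckerMap_apply,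
    Matrix.vecMulVec_apply, Pi.star_apply, Fintype.sum_prod_type, Fin.sum_univ_two, psiv, wA,
    Matrix.cons_val_zero, Matrix.cons_val_one, Matrix.head_cons, Prod.mk.injEq,
    Fin.isValue, Fin.zero_eta, Fin.mk_one, ite_true, ite_false, reduceIte, one_ne_zero,
    Fin.zero_ne_one, and_self, and_true, true_and, and_false, false_and,
    Complex.star_def, Complex.conj_ofReal, star_zero, map_zero, mul_zero, zero_mul, add_zero,
    zero_add]
  show ((((Gf t a b x y)^2 : ℝ)) : ℂ) = _
  unfold Gf
  push_cast
  ring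

lemma curve_mem (t : ℝ) : curve t ∈ Qfinite := by
  refine ⟨2, two_pos, vecMulVec (psiv t) (star (psiv t)),
    fun x a => vecMulVec (wA t x a) (star (wA t x a)),
    fun y b => vecMulVec (wA t y b) (star (wA t y b)),
    outer_psd _, trace_psiv t, fun x a => outer_psd _, fun y b => outer_psd _,
    sum_wA t, sum_wA t, fun a b x y => trace_formula t a b x y⟩

lemma key (B : Behaviour) (hB : bell B PHardy = sSup (bell B '' Q)) :
    bell B (detBehaviour (fun _ => 0) (fun _ => 0)) = sSup (bell B '' Q) := by
  have hbdd := bddAbove_bell_Q B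
  have hUB : ∀ t : ℝ, bell B (curve t) ≤ sSup (bell B '' Q) :=
    fun t => le_csSup hbdd ⟨curve t, subset_closure (curve_mem t), rfl⟩
  have hmax : IsLocalMax (fun t => bell B (curve t)) 0 := by
    apply Filter.Eventually.of_forall
    intro t
    show bell B (curve t) ≤ bell B (curve 0)
    rw [curve_zero, hB]
    exact hUB t
  have hd : HasDerivAt (fun t => bell B (curve t))
      (∑ a : Fin 2, ∑ b : Fin 2, ∑ x : Fin 2, ∑ y : Fin 2,
        B a b x y * (mu * (PHardy a b x y - detBehaviour (fun _ => 0) (fun _ => 0) a b x y))) 0 := by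
    have hfun : (fun t => bell B (curve t))
        = fun t => ∑ a : Fin 2, ∑ b : Fin 2, ∑ x : Fin 2, ∑ y : Fin 2,
            B a b x y * curve t a b x y := rfl
    rw [hfun]
    refine HasDerivAt.fun_sum fun a _ => HasDerivAt.fun_sum fun b _ => HasDerivAt.fun_sum fun x _ =>
      HasDerivAt.fun_sum fun y _ => ?_
    exact (hasDerivAt_curve_entry a b x y).const_mul (B a b x y)
  have hz := hmax.deriv_eq_zero
  rw [hd.deriv] at hz
  have htrans : (∑ a : Fin 2, ∑ b : Fin 2, ∑ x : Fin 2, ∑ y : Fin 2,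
      B a b x y * (mu * (PHardy a b x y - detBehaviour (fun _ => 0) (fun _ => 0) a b x y)))
      = mu * (bell B PHardy - bell B (detBehaviour (fun _ => 0) (fun _ => 0))) := by
    unfold bell
    rw [mul_sub, Finset.mul_sum, Finset.mul_sum, ← Finset.sum_sub_distrib]
    refine Finset.sum_congr rfl fun a _ => ?_
    rw [Finset.mul_sum, Finset.mul_sum, ← Finset.sum_sub_distrib]
    refine Finset.sum_congr rfl fun b _ => ?_
    rw [Finset.mul_sum, Finset.mul_sum, ← Finset.sum_sub_distrib]
    refine Finset.sum_congr rfl fun x _ => ?_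
    rw [Finset.mul_sum, Finset.mul_sum, ← Finset.sum_sub_distrib]
    refine Finset.sum_congr rfl fun y _ => ?_
    ring
  rw [htrans] at hz
  rcases mul_eq_zero.mp hz with h | h
  · exact absurd h mu_ne
  · have := sub_eq_zero.mp h
    rw [← this, hB]

lemma det_mem_L (f g : Fin 2 → Fin 2) : detBehaviour f g ∈ L :=
  subset_convexHull ℝ _ ⟨f, g, rfl⟩

end

end HardyNE


/-- **The Hardy point is not exposed.** Every Bell function maximised (over `Q`)
by the Hardy point is also maximised by some local behaviour, so `β_L = β_Q` for
every such function; since the Hardy point is not local, it is not an exposed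
point of the quantum set. -/
theorem hardy_not_exposed :
    (∀ B : Behaviour, bell B PHardy = sSup (bell B '' Q) →
      ∃ PL ∈ L, bell B PL = sSup (bell B '' Q)) ∧
    (∀ B : Behaviour, bell B PHardy = sSup (bell B '' Q) →
      sSup (bell B '' L) = sSup (bell B '' Q)) ∧
    PHardy ∉ L ∧
    ¬ ∃ B : Behaviour, {P ∈ Q | bell B P = sSup (bell B '' Q)} = {PHardy} := by
  refine ⟨?_, ?_, HardyNE.PHardy_not_local, ?_⟩
  · intro B hB
    exact ⟨detBehaviour (fun _ => 0) (fun _ => 0), HardyNE.det_mem_L _ _, HardyNE.key B hB⟩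
  · intro B hB
    have hPD := HardyNE.key B hB
    have hPDL : detBehaviour (fun _ => 0) (fun _ => 0) ∈ L := HardyNE.det_mem_L _ _
    have hub : ∀ P ∈ L, bell B P ≤ sSup (bell B '' Q) := by
      intro P hP
      refine convexHull_min ?_ (convex_halfSpace_le (HardyNE.bell_isLinearMap B) _) hP
      rintro P' ⟨f, g, rfl⟩
      exact le_csSup (HardyNE.bddAbove_bell_Q B)
        ⟨_, subset_closure (HardyNE.det_mem_qfinite f g), rfl⟩
    apply le_antisymm
    · refine csSup_le ⟨_, Set.mem_image_of_mem _ hPDL⟩ ?_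
      rintro z ⟨P, hP, rfl⟩
      exact hub P hP
    · rw [← hPD]
      refine le_csSup ⟨sSup (bell B '' Q), ?_⟩ (Set.mem_image_of_mem _ hPDL)
      rintro z ⟨P, hP, rfl⟩
      exact hub P hP
  · rintro ⟨B, hface⟩
    have hPH : PHardy ∈ {P ∈ Q | bell B P = sSup (bell B '' Q)} := by
      rw [hface]; exact rfl
    obtain ⟨hPHQ, hPHmax⟩ := hPH
    have hPD := HardyNE.key B hPHmax
    have hPDface : detBehaviour (fun _ => 0) (fun _ => 0)
        ∈ {P ∈ Q | bell B P = sSup (bell B '' Q)} :=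
      ⟨subset_closure (HardyNE.det_mem_qfinite _ _), hPD⟩
    rw [hface, Set.mem_singleton_iff] at hPDface
    exact HardyNE.PHardy_not_local (hPDface ▸ HardyNE.det_mem_L (fun _ => 0) (fun _ => 0))
end

section
/- Let P_Hardy be the behaviour in the (2,2,2,2) Bell scenario determined by ⟨A₀⟩ = ⟨B₀⟩ = 5 − 2√5, ⟨A₁⟩ = ⟨B₁⟩ = √5 − 2, ⟨A₀B₀⟩ = 6√5 − 13, ⟨A₀B₁⟩ = ⟨A₁B₀⟩ = 3√5 − 6, ⟨A₁B₁⟩ = 2√5 − 5 (probabilities recovered via P(ab|xy) = (1 + (−1)^a⟨A_x⟩ + (−1)^b⟨B_y⟩ + (−1)^{a+b}⟨A_xB_y⟩)/4). Then: (i) P_Hardy ∈ Q, realised by the two-qubit state |ψ⟩ = √((1−α²)/2)(|01⟩ + |10⟩) + α|11⟩ with α = √(√5 − 2) and observables A₀ = B₀ = 2α·σ_x + √(1 − 4α²)·σ_z, A₁ = B₁ = −σ_z; (ii) P_Hardy(11|11) = 0, P_Hardy(10|01) = 0 and P_Hardy(01|10) = 0; and (iii) P_Hardy ∉ L, since its CHSH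 value ⟨A₀B₀⟩ + ⟨A₀B₁⟩ + ⟨A₁B₀⟩ − ⟨A₁B₁⟩ = 10√5 − 20 > 2. -/
open Matrix Kronecker ComplexOrder BigOperators

noncomputable def alphaH : ℝ := Real.sqrt (Real.sqrt 5 - 2)

/-- The Hardy state `√((1−α²)/2)(|01⟩ + |10⟩) + α|11⟩` with `α = √(√5 − 2)`. -/
noncomputable def psiH : Fin 2 × Fin 2 → ℂ := fun p =>
  if p = (0, 0) then 0
  else if p = (1, 1) then (alphaH : ℂ)
  else (Real.sqrt ((1 - alphaH ^ 2) / 2) : ℂ)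

noncomputable def rhoH : Matrix (Fin 2 × Fin 2) (Fin 2 × Fin 2) ℂ :=
  Matrix.vecMulVec psiH (star psiH)

def sigmaX : Matrix (Fin 2) (Fin 2) ℂ := !![0, 1; 1, 0]
def sigmaZ : Matrix (Fin 2) (Fin 2) ℂ := !![1, 0; 0, -1]

/-- The Hardy observables `A₀ = B₀ = 2α σ_x + √(1 − 4α²) σ_z`, `A₁ = B₁ = −σ_z`. -/
noncomputable def obsH : Fin 2 → Matrix (Fin 2) (Fin 2) ℂ :=
  ![(2 * alphaH : ℂ) • sigmaX + (Real.sqrt (1 - 4 * alphaH ^ 2) : ℂ) • sigmaZ, -sigmaZ]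

/-- Measurement operators of a binary observable: `E_a = (1 + (−1)^a A)/2`. -/
noncomputable def measOp (A : Matrix (Fin 2) (Fin 2) ℂ) (a : Fin 2) :
    Matrix (Fin 2) (Fin 2) ℂ :=
  (1 / 2 : ℂ) • (1 + ((-1 : ℂ) ^ (a : ℕ)) • A)


section HardyAux

private lemma s5_sq : Real.sqrt 5 ^ 2 = 5 := Real.sq_sqrt (by norm_num)
private lemma s5_ge : (2:ℝ) ≤ Real.sqrt 5 := by nlinarith [s5_sq, Real.sqrt_nonneg 5]
private lemma ha2 : alphaH ^ 2 = Real.sqrt 5 - 2 := Real.sq_sqrt (by linarith [s5_ge])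
private lemma h14 : Real.sqrt (1 - 4 * alphaH ^ 2) = Real.sqrt 5 - 2 := by
  rw [ha2, show 1 - 4*(Real.sqrt 5 - 2) = (Real.sqrt 5 - 2)^2 by nlinarith [s5_sq]]
  exact Real.sqrt_sq (by linarith [s5_ge])
private lemma hpsi : Real.sqrt ((1 - alphaH ^ 2) / 2) = (Real.sqrt 5 - 1)/2 := by
  rw [ha2, show (1 - (Real.sqrt 5 - 2))/2 = ((Real.sqrt 5 - 1)/2)^2 by nlinarith [s5_sq]]
  exact Real.sqrt_sq (by nlinarith [s5_ge])

set_option maxHeartbeats 1600000 in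
private lemma traceCase : ∀ a b x y : Fin 2, ((PHardy a b x y : ℝ) : ℂ) =
      ((measOp (obsH x) a ⊗ₖ measOp (obsH y) b) * rhoH).trace := by
  have hs : ((Real.sqrt 5 : ℝ) : ℂ)^2 = 5 := by rw [← Complex.ofReal_pow, s5_sq]; norm_num
  have hac : ((alphaH : ℝ) : ℂ)^2 = (Real.sqrt 5 : ℝ) - 2 := by
    rw [← Complex.ofReal_pow, ha2]; push_cast; ring
  have hac4 : ((alphaH : ℝ) : ℂ)^4 = 9 - 4 * (Real.sqrt 5 : ℝ) := by
    rw [show ((alphaH : ℝ) : ℂ)^4 = (((alphaH : ℝ) : ℂ)^2)^2 by ring, hac]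
    linear_combination hs
  have hs3 : ((Real.sqrt 5 : ℝ) : ℂ)^3 = 5 * (Real.sqrt 5 : ℝ) := by
    rw [show ((Real.sqrt 5 : ℝ) : ℂ)^3 = ((Real.sqrt 5 : ℝ) : ℂ)^2 * (Real.sqrt 5:ℝ) by ring, hs]
  have hs4 : ((Real.sqrt 5 : ℝ) : ℂ)^4 = 25 := by
    rw [show ((Real.sqrt 5 : ℝ) : ℂ)^4 = (((Real.sqrt 5 : ℝ) : ℂ)^2)^2 by ring, hs]; norm_num
  intro a b x y
  fin_cases a <;> fin_cases b <;> fin_cases x <;> fin_cases y <;>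
  · simp only [PHardy, fromCorr, Matrix.cons_val_zero, Matrix.cons_val_one, Matrix.head_cons,
      psiH, rhoH, obsH, measOp, sigmaX, sigmaZ, h14, hpsi,
      Matrix.trace, Matrix.diag, Matrix.mul_apply, Fintype.sum_prod_type,
      Fin.sum_univ_two, Matrix.kroneckerMap_apply, Matrix.vecMulVec_apply, Pi.star_apply,
      Matrix.add_apply, Matrix.smul_apply, Matrix.one_apply, Matrix.neg_apply,
      Matrix.cons_val', Matrix.empty_val', Matrix.cons_val_fin_one, Matrix.of_apply, Fin.isValue,
      smul_eq_mul]
    norm_num [Complex.conj_ofReal]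
    try ring_nf
    try simp only [hac, hac4]
    try ring_nf
    try simp only [hs, hs3, hs4]
    try ring_nf

private lemma rho_psd : rhoH.PosSemidef := by
  have h : rhoH = (Matrix.replicateCol (Fin 1) psiH) * (Matrix.replicateCol (Fin 1) psiH)ᴴ := by
    rw [rhoH, Matrix.vecMulVec_eq (Fin 1), Matrix.conjTranspose_replicateCol]; rfl
  rw [h]; exact Matrix.posSemidef_self_mul_conjTranspose _

private lemma rho_trace : rhoH.trace = 1 := by
  have hs : ((Real.sqrt 5 : ℝ) : ℂ)^2 = 5 := by rw [← Complex.ofReal_pow, s5_sq]; norm_num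
  have hac : ((alphaH : ℝ) : ℂ)^2 = (Real.sqrt 5 : ℝ) - 2 := by
    rw [← Complex.ofReal_pow, ha2]; push_cast; ring
  simp only [rhoH, Matrix.trace, Matrix.diag, Matrix.vecMulVec_apply, Pi.star_apply,
    Fintype.sum_prod_type, Fin.sum_univ_two, psiH, hpsi]
  norm_num [Complex.conj_ofReal]
  linear_combination hac + hs/2

private lemma meas_psd (x a : Fin 2) : (measOp (obsH x) a).PosSemidef := by
  have hs : ((Real.sqrt 5 : ℝ) : ℂ)^2 = 5 := by rw [← Complex.ofReal_pow, s5_sq]; norm_num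
  have hac : ((alphaH : ℝ) : ℂ)^2 = (Real.sqrt 5 : ℝ) - 2 := by
    rw [← Complex.ofReal_pow, ha2]; push_cast; ring
  have h : measOp (obsH x) a = (measOp (obsH x) a)ᴴ * (measOp (obsH x) a) := by
    ext i j
    fin_cases x <;> fin_cases a <;> fin_cases i <;> fin_cases j <;>
    · simp only [measOp, obsH, sigmaX, sigmaZ, h14, Matrix.mul_apply, Fin.sum_univ_two,
        Matrix.conjTranspose_apply, Matrix.add_apply, Matrix.smul_apply, Matrix.one_apply,
        Matrix.neg_apply, Matrix.cons_val_zero, Matrix.cons_val_one, Matrix.head_cons,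
        Matrix.cons_val', Matrix.empty_val', Matrix.cons_val_fin_one, Matrix.of_apply,
        Fin.isValue, smul_eq_mul, star_mul', star_add, star_one, star_zero, star_neg,
        Complex.star_def, Complex.conj_ofReal, map_div₀, _root_.map_one, map_ofNat]
      norm_num [Complex.conj_ofReal, map_ofNat]
      try first | ring1 | linear_combination (-1 : ℂ) * hac - hs/4
  rw [h]; exact Matrix.posSemidef_conjTranspose_mul_self _

private lemma meas_sum (x : Fin 2) : ∑ a, measOp (obsH x) a = 1 := by
  ext i j
  simp [measOp, Fin.sum_univ_two, Matrix.add_apply, Matrix.smul_apply, smul_eq_mul]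
  ring

private lemma zero1 : PHardy 1 1 1 1 = 0 := by simp [PHardy, fromCorr]; ring
private lemma zero2 : PHardy 1 0 0 1 = 0 := by simp [PHardy, fromCorr]; ring
private lemma zero3 : PHardy 0 1 1 0 = 0 := by simp [PHardy, fromCorr]; ring
private lemma chshH : chsh PHardy = 10 * Real.sqrt 5 - 20 := by
  simp [chsh, corr, PHardy, fromCorr, Fin.sum_univ_two]; ring
private lemma chsh_gt : (2:ℝ) < 10 * Real.sqrt 5 - 20 := by
  nlinarith [Real.sq_sqrt (by norm_num : (5:ℝ) ≥ 0), Real.sqrt_nonneg 5]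

private lemma chsh_lin : IsLinearMap ℝ chsh := by
  constructor
  · intro P Q; simp [chsh, corr, Fin.sum_univ_two]; ring
  · intro c P; simp [chsh, corr, Fin.sum_univ_two, smul_eq_mul]; ring

private lemma det_chsh (f g : Fin 2 → Fin 2) : chsh (detBehaviour f g) ≤ 2 := by
  have h0 : ∀ i : Fin 2, i = 0 ∨ i = 1 := by decide
  rcases h0 (f 0) with h1|h1 <;> rcases h0 (f 1) with h2|h2 <;>
    rcases h0 (g 0) with h3|h3 <;> rcases h0 (g 1) with h4|h4 <;>
  · simp [chsh, corr, detBehaviour, Fin.sum_univ_two, h1, h2, h3, h4]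
    norm_num

private lemma not_local : PHardy ∉ L := by
  intro hP
  have hsub : L ⊆ {P : Behaviour | chsh P ≤ 2} := by
    apply convexHull_min
    · rintro P ⟨f, g, rfl⟩; exact det_chsh f g
    · exact convex_halfSpace_le chsh_lin 2
  have := hsub hP
  rw [Set.mem_setOf_eq, chshH] at this
  linarith [chsh_gt]

private lemma inQ : PHardy ∈ Q := by
  apply subset_closure
  exact ⟨2, by norm_num, rhoH, (fun x a => measOp (obsH x) a), (fun y b => measOp (obsH y) b),
    rho_psd, rho_trace, (fun x a => meas_psd x a), (fun y b => meas_psd y b),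
    meas_sum, meas_sum, traceCase⟩

end HardyAux

/-- **Properties of the Hardy point:** (i) it is realised by the explicit two-qubit
Hardy state and observables, hence belongs to `Q`; (ii) it satisfies the three Hardy
zero constraints `P(11|11) = P(10|01) = P(01|10) = 0`; (iii) its CHSH value is
`10√5 − 20 > 2`, hence it is nonlocal. -/
theorem hardy_point_properties :
    (∀ a b x y : Fin 2, (PHardy a b x y : ℂ) =
      ((measOp (obsH x) a ⊗ₖ measOp (obsH y) b) * rhoH).trace) ∧
    PHardy ∈ Q ∧
    PHardy 1 1 1 1 = 0 ∧ PHardy 1 0 0 1 = 0 ∧ PHardy 0 1 1 0 = 0 ∧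
    chsh PHardy = 10 * Real.sqrt 5 - 20 ∧
    (2 : ℝ) < 10 * Real.sqrt 5 - 20 ∧
    PHardy ∉ L :=
  ⟨traceCase, inQ, zero1, zero2, zero3, chshH, chsh_gt, not_local⟩
end

section
/- In the (2,2,2,2) Bell scenario, consider the Bell function B·P := ⟨A₀B₀⟩ + ⟨A₀B₁⟩ + ⟨A₁B₀⟩ + ⟨A₁B₁⟩. Then β_L(B) = β_Q(B) = β_NS(B) = 4, and the set of maximisers is the same for all three sets: F_L(B) = F_Q(B) = F_NS(B) is the line segment joining the deterministic point with ⟨A_x⟩ = ⟨B_y⟩ = ⟨A_xB_y⟩ = 1 for all x,y and the deterministic point with ⟨A_x⟩ = ⟨B_y⟩ = −1 and ⟨A_xB_y⟩ = 1 for all x,y. -/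
open Matrix Kronecker ComplexOrder BigOperators

/-- The Bell functional `B·P = ⟨A₀B₀⟩ + ⟨A₀B₁⟩ + ⟨A₁B₀⟩ + ⟨A₁B₁⟩`. -/
def Bval (P : Behaviour) : ℝ := corr P 0 0 + corr P 0 1 + corr P 1 0 + corr P 1 1

/-- The deterministic point with all marginals and correlators `+1`. -/
noncomputable def Pplus : Behaviour := fromCorr (fun _ => 1) (fun _ => 1) (fun _ _ => 1)

/-- The deterministic point with marginals `−1` and all correlators `+1`. -/
noncomputable def Pminus : Behaviour := fromCorr (fun _ => -1) (fun _ => -1) (fun _ _ => 1)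


lemma kron_conjTranspose {m n : Type*} [Fintype m] [Fintype n]
    (A : Matrix m m ℂ) (B : Matrix n n ℂ) : (A ⊗ₖ B)ᴴ = Aᴴ ⊗ₖ Bᴴ := by
  ext ⟨i, j⟩ ⟨k, l⟩
  simp [Matrix.conjTranspose_apply, Matrix.kroneckerMap_apply, mul_comm]

open scoped MatrixOrder in
theorem Matrix.posSemidef_iff_eq_transpose_mul_self {n : Type*} [Fintype n] [DecidableEq n]
    {A : Matrix n n ℂ} : A.PosSemidef ↔ ∃ B : Matrix n n ℂ, A = Bᴴ * B := by
  constructor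
  · intro hA
    obtain ⟨B, rfl⟩ := CStarAlgebra.nonneg_iff_eq_star_mul_self.mp hA.nonneg
    exact ⟨B, rfl⟩
  · rintro ⟨B, rfl⟩
    exact Matrix.posSemidef_conjTranspose_mul_self B

lemma kron_posSemidef {m n : Type*} [Fintype m] [Fintype n] [DecidableEq m] [DecidableEq n]
    {A : Matrix m m ℂ} {B : Matrix n n ℂ} (hA : A.PosSemidef) (hB : B.PosSemidef) :
    (A ⊗ₖ B).PosSemidef := by
  obtain ⟨C, rfl⟩ := Matrix.posSemidef_iff_eq_transpose_mul_self.mp hA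
  obtain ⟨D, rfl⟩ := Matrix.posSemidef_iff_eq_transpose_mul_self.mp hB
  refine Matrix.posSemidef_iff_eq_transpose_mul_self.mpr ⟨C ⊗ₖ D, ?_⟩
  rw [Matrix.mul_kronecker_mul, kron_conjTranspose]

lemma psd_diag_nonneg {n : Type*} [Fintype n] [DecidableEq n] {A : Matrix n n ℂ}
    (hA : A.PosSemidef) (i : n) : 0 ≤ A i i := by
  exact hA.diag_nonneg

lemma psd_trace_nonneg {n : Type*} [Fintype n] [DecidableEq n] {A : Matrix n n ℂ}
    (hA : A.PosSemidef) : 0 ≤ A.trace := by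
  rw [Matrix.trace]
  exact Finset.sum_nonneg fun i _ => psd_diag_nonneg hA i

lemma trace_mul_psd_nonneg {n : Type*} [Fintype n] [DecidableEq n]
    {M ρ : Matrix n n ℂ} (hM : M.PosSemidef) (hρ : ρ.PosSemidef) : 0 ≤ (M * ρ).trace := by
  obtain ⟨B, rfl⟩ := Matrix.posSemidef_iff_eq_transpose_mul_self.mp hM
  have h : (Bᴴ * B * ρ).trace = (B * ρ * Bᴴ).trace := by
    rw [Matrix.trace_mul_cycle, Matrix.trace_mul_cycle]
  rw [h]
  exact psd_trace_nonneg (hρ.mul_mul_conjTranspose_same B)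

lemma sum_kron {m n ι κ : Type*} [Fintype m] [Fintype n] (s : Finset ι) (t : Finset κ)
    (A : ι → Matrix m m ℂ) (B : κ → Matrix n n ℂ) :
    (∑ a ∈ s, A a) ⊗ₖ (∑ b ∈ t, B b) = ∑ a ∈ s, ∑ b ∈ t, A a ⊗ₖ B b := by
  ext ⟨i, j⟩ ⟨k, l⟩
  simp [Matrix.kroneckerMap_apply, Matrix.sum_apply, Finset.sum_mul_sum]
lemma Qfinite_subset_NS : Qfinite ⊆ NS := by
  rintro P ⟨d, hd, ρ, E, F, hρ, hρtr, hE, hF, hEsum, hFsum, hP⟩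
  have key : ∀ x y : Fin 2, ∀ A B : Matrix (Fin d) (Fin d) ℂ,
      True := fun _ _ _ _ => trivial
  refine ⟨?_, ?_, ?_, ?_⟩
  · intro a b x y
    have h := trace_mul_psd_nonneg (kron_posSemidef (hE x a) (hF y b)) hρ
    rw [← hP a b x y] at h
    exact Complex.zero_le_real.mp h
  · intro x y
    have h : ((∑ a : Fin 2, ∑ b : Fin 2, P a b x y : ℝ) : ℂ)
        = ((∑ a : Fin 2, ∑ b : Fin 2, E x a ⊗ₖ F y b) * ρ).trace := by
      push_cast
      simp_rw [hP, Finset.sum_mul, Matrix.trace_sum]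
    rw [← sum_kron, hEsum, hFsum, Matrix.one_kronecker_one, Matrix.one_mul, hρtr] at h
    exact_mod_cast h
  · intro a x y y'
    have h : ∀ y : Fin 2, ((∑ b : Fin 2, P a b x y : ℝ) : ℂ)
        = ((E x a ⊗ₖ (1 : Matrix (Fin d) (Fin d) ℂ)) * ρ).trace := by
      intro y
      have : (E x a) ⊗ₖ (1 : Matrix (Fin d) (Fin d) ℂ)
          = ∑ b : Fin 2, E x a ⊗ₖ F y b := by
        rw [← hFsum y]
        ext ⟨i, j⟩ ⟨k, l⟩
        simp [Matrix.kroneckerMap_apply, Matrix.sum_apply, Fin.sum_univ_two, mul_add]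
      rw [this, Finset.sum_mul, Matrix.trace_sum]
      push_cast
      simp_rw [hP]
    have := (h y).trans (h y').symm
    exact_mod_cast this
  · intro b x x' y
    have h : ∀ x : Fin 2, ((∑ a : Fin 2, P a b x y : ℝ) : ℂ)
        = (((1 : Matrix (Fin d) (Fin d) ℂ) ⊗ₖ F y b) * ρ).trace := by
      intro x
      have : (1 : Matrix (Fin d) (Fin d) ℂ) ⊗ₖ F y b
          = ∑ a : Fin 2, E x a ⊗ₖ F y b := by
        rw [← hEsum x]
        ext ⟨i, j⟩ ⟨k, l⟩
        simp [Matrix.kroneckerMap_apply, Matrix.sum_apply, Fin.sum_univ_two, add_mul]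
      rw [this, Finset.sum_mul, Matrix.trace_sum]
      push_cast
      simp_rw [hP]
    have := (h x).trans (h x').symm
    exact_mod_cast this

lemma det_mem_NS (f g : Fin 2 → Fin 2) : detBehaviour f g ∈ NS := by
  have hsB : ∀ a x y, ∑ b : Fin 2, detBehaviour f g a b x y
      = if a = f x then 1 else 0 := by
    intro a x y
    by_cases h : a = f x <;> simp [detBehaviour, h, ite_and, Finset.sum_ite_eq']
  have hsA : ∀ b x y, ∑ a : Fin 2, detBehaviour f g a b x y
      = if b = g y then 1 else 0 := by
    intro b x y
    by_cases h : b = g y <;> simp [detBehaviour, h, ite_and, Finset.sum_ite_eq']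
  refine ⟨fun a b x y => ?_, fun x y => ?_, fun a x y y' => ?_, fun b x x' y => ?_⟩
  · unfold detBehaviour; split_ifs <;> norm_num
  · simp [hsB, Finset.sum_ite_eq']
  · simp [hsB]
  · simp [hsA]

lemma NS_convex : Convex ℝ NS := by
  rintro P ⟨hP0, hP1, hPA, hPB⟩ R ⟨hR0, hR1, hRA, hRB⟩ u v hu hv huv
  have happ : ∀ a b x y, (u • P + v • R) a b x y = u * P a b x y + v * R a b x y := by
    intros; rfl
  refine ⟨fun a b x y => ?_, fun x y => ?_, fun a x y y' => ?_, fun b x x' y => ?_⟩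
  · rw [happ]
    exact add_nonneg (mul_nonneg hu (hP0 a b x y)) (mul_nonneg hv (hR0 a b x y))
  · simp only [happ, Finset.sum_add_distrib, ← Finset.mul_sum, hP1, hR1]
    linarith
  · simp only [happ, Finset.sum_add_distrib, ← Finset.mul_sum, hPA a x y y', hRA a x y y']
  · simp only [happ, Finset.sum_add_distrib, ← Finset.mul_sum, hPB b x x' y, hRB b x x' y]

lemma NS_isClosed : IsClosed NS := by
  have hc : ∀ a b x y : Fin 2, Continuous fun P : Behaviour => P a b x y := fun a b x y =>
    (continuous_apply y).comp ((continuous_apply x).comp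
      ((continuous_apply b).comp (continuous_apply a)))
  unfold NS
  simp only [Set.setOf_and]
  refine IsClosed.inter ?_ (IsClosed.inter ?_ (IsClosed.inter ?_ ?_)) <;>
    simp only [Set.setOf_forall]
  · exact isClosed_iInter fun a => isClosed_iInter fun b => isClosed_iInter fun x =>
      isClosed_iInter fun y => isClosed_le continuous_const (hc a b x y)
  · exact isClosed_iInter fun x => isClosed_iInter fun y =>
      isClosed_eq (continuous_finset_sum _ fun a _ => continuous_finset_sum _ fun b _ =>
        hc a b x y) continuous_const
  · exact isClosed_iInter fun a => isClosed_iInter fun x => isClosed_iInter fun y =>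
      isClosed_iInter fun y' => isClosed_eq
        (continuous_finset_sum _ fun b _ => hc a b x y)
        (continuous_finset_sum _ fun b _ => hc a b x y')
  · exact isClosed_iInter fun b => isClosed_iInter fun x => isClosed_iInter fun x' =>
      isClosed_iInter fun y => isClosed_eq
        (continuous_finset_sum _ fun a _ => hc a b x y)
        (continuous_finset_sum _ fun a _ => hc a b x' y)

lemma corr_fromCorr (mA mB : Fin 2 → ℝ) (c : Fin 2 → Fin 2 → ℝ) (x y : Fin 2) :
    corr (fromCorr mA mB c) x y = c x y := by
  simp only [corr, fromCorr, Fin.sum_univ_two]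
  norm_num
  ring

lemma Bval_Pplus : Bval Pplus = 4 := by
  simp [Bval, Pplus, corr_fromCorr]; norm_num

lemma Bval_Pminus : Bval Pminus = 4 := by
  simp [Bval, Pminus, corr_fromCorr]; norm_num

lemma Pplus_eq : Pplus = detBehaviour (fun _ => 0) (fun _ => 0) := by
  funext a b x y
  fin_cases a <;> fin_cases b <;> simp [Pplus, fromCorr, detBehaviour] <;> norm_num

lemma Pminus_eq : Pminus = detBehaviour (fun _ => 1) (fun _ => 1) := by
  funext a b x y
  fin_cases a <;> fin_cases b <;> simp [Pminus, fromCorr, detBehaviour] <;> norm_num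

lemma corr_le_one {P : Behaviour} (hP : P ∈ NS) (x y : Fin 2) : corr P x y ≤ 1 := by
  obtain ⟨h0, h1, -, -⟩ := hP
  calc corr P x y ≤ ∑ a : Fin 2, ∑ b : Fin 2, P a b x y := by
        refine Finset.sum_le_sum fun a _ => Finset.sum_le_sum fun b _ => ?_
        rcases neg_one_pow_eq_or ℝ ((a : ℕ) + (b : ℕ)) with h | h <;> rw [h] <;>
          nlinarith [h0 a b x y]
    _ = 1 := h1 x y

lemma Bval_le_four {P : Behaviour} (hP : P ∈ NS) : Bval P ≤ 4 := by
  have h := corr_le_one hP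
  unfold Bval
  linarith [h 0 0, h 0 1, h 1 0, h 1 1]

lemma corr_comb (P R : Behaviour) (u v : ℝ) (x y : Fin 2) :
    corr (u • P + v • R) x y = u * corr P x y + v * corr R x y := by
  simp only [corr, Fin.sum_univ_two, Pi.add_apply, Pi.smul_apply, smul_eq_mul]
  ring

lemma Bval_comb (P R : Behaviour) (u v : ℝ) :
    Bval (u • P + v • R) = u * Bval P + v * Bval R := by
  simp only [Bval, corr_comb]; ring

lemma Pplus_mem_NS : Pplus ∈ NS := by rw [Pplus_eq]; exact det_mem_NS _ _
lemma Pminus_mem_NS : Pminus ∈ NS := by rw [Pminus_eq]; exact det_mem_NS _ _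

lemma face_NS_eq : {P ∈ NS | Bval P = 4} = segment ℝ Pplus Pminus := by
  ext P
  constructor
  · rintro ⟨hNS, hB⟩
    have hcle := corr_le_one hNS
    obtain ⟨h0, h1, hA, hBm⟩ := hNS
    unfold Bval at hB
    have hc : ∀ x y : Fin 2, corr P x y = 1 := by
      intro x y
      have hx : x = 0 ∨ x = 1 := by omega
      have hy : y = 0 ∨ y = 1 := by omega
      rcases hx with rfl | rfl <;> rcases hy with rfl | rfl <;>
        linarith [hcle 0 0, hcle 0 1, hcle 1 0, hcle 1 1]
    have hz : ∀ x y : Fin 2, P 0 1 x y = 0 ∧ P 1 0 x y = 0 := by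
      intro x y
      have hcxy := hc x y
      have hsxy := h1 x y
      simp only [corr, Fin.sum_univ_two] at hcxy
      simp only [Fin.sum_univ_two] at hsxy
      norm_num at hcxy
      constructor <;> linarith [h0 0 1 x y, h0 1 0 x y]
    have h01 : ∀ x y, P 0 1 x y = 0 := fun x y => (hz x y).1
    have h10 : ∀ x y, P 1 0 x y = 0 := fun x y => (hz x y).2
    have h00 : ∀ x y, P 0 0 x y = P 0 0 0 0 := by
      intro x y
      have e1 := hA 0 x y 0
      have e2 := hBm 0 x 0 0
      simp only [Fin.sum_univ_two, h01, h10, add_zero, zero_add] at e1 e2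
      linarith
    have h11 : ∀ x y, P 1 1 x y = 1 - P 0 0 0 0 := by
      intro x y
      have hs := h1 x y
      simp only [Fin.sum_univ_two, h01 x y, h10 x y, h00 x y, add_zero, zero_add] at hs
      linarith
    refine ⟨P 0 0 0 0, 1 - P 0 0 0 0, h0 0 0 0 0, ?_, by ring, ?_⟩
    · linarith [h0 1 1 0 0, h11 0 0]
    · funext a b x y
      have e00 := h00 x y
      have e11 := h11 x y
      have e01 := h01 x y
      have e10 := h10 x y
      fin_cases a <;> fin_cases b <;>
        simp only [Pi.add_apply, Pi.smul_apply, smul_eq_mul, Pplus, Pminus, fromCorr] <;>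
        norm_num <;> linarith
  · rintro ⟨u, v, hu, hv, huv, rfl⟩
    refine ⟨NS_convex Pplus_mem_NS Pminus_mem_NS hu hv huv, ?_⟩
    rw [Bval_comb, Bval_Pplus, Bval_Pminus]; linarith

lemma mix_hasRealisation (u v : ℝ) (hu : 0 ≤ u) (hv : 0 ≤ v) (huv : u + v = 1) :
    HasRealisation 2 (u • Pplus + v • Pminus) := by
  classical
  refine ⟨Matrix.diagonal (fun p : Fin 2 × Fin 2 =>
      if p.1 = 0 ∧ p.2 = 0 then (u : ℂ) else if p.1 = 1 ∧ p.2 = 1 then (v : ℂ) else 0),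
    (fun _ a => Matrix.diagonal fun i => if i = a then 1 else 0),
    (fun _ b => Matrix.diagonal fun i => if i = b then 1 else 0),
    ?_, ?_, ?_, ?_, ?_, ?_, ?_⟩
  · refine Matrix.posSemidef_diagonal_iff.mpr fun p => ?_
    split_ifs
    · exact Complex.zero_le_real.mpr hu
    · exact Complex.zero_le_real.mpr hv
    · exact le_refl 0
  · rw [Matrix.trace_diagonal]
    rw [Fintype.sum_prod_type]
    simp [Fin.sum_univ_two]
    rw [← Complex.ofReal_add, huv, Complex.ofReal_one]
  · intro x a
    refine Matrix.posSemidef_diagonal_iff.mpr fun i => ?_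
    split_ifs <;> simp
  · intro y b
    refine Matrix.posSemidef_diagonal_iff.mpr fun i => ?_
    split_ifs <;> simp
  · intro x
    ext i j
    fin_cases i <;> fin_cases j <;>
      simp [Matrix.sum_apply, Fin.sum_univ_two, Matrix.diagonal, Matrix.one_apply]
  · intro y
    ext i j
    fin_cases i <;> fin_cases j <;>
      simp [Matrix.sum_apply, Fin.sum_univ_two, Matrix.diagonal, Matrix.one_apply]
  · intro a b x y
    rw [Matrix.diagonal_kronecker_diagonal, Matrix.diagonal_mul_diagonal,
      Matrix.trace_diagonal]
    rw [Fintype.sum_prod_type]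
    simp only [Fin.sum_univ_two]
    fin_cases a <;> fin_cases b <;>
      simp [Pplus, Pminus, fromCorr, Pi.add_apply, Pi.smul_apply, smul_eq_mul] <;>
      norm_num

lemma L_subset_NS : L ⊆ NS :=
  convexHull_min (by rintro P ⟨f, g, rfl⟩; exact det_mem_NS f g) NS_convex

lemma Q_subset_NS : Q ⊆ NS := closure_minimal Qfinite_subset_NS NS_isClosed

lemma segment_subset_L : segment ℝ Pplus Pminus ⊆ L := by
  have h1 : Pplus ∈ L := subset_convexHull ℝ _ ⟨_, _, Pplus_eq⟩
  have h2 : Pminus ∈ L := subset_convexHull ℝ _ ⟨_, _, Pminus_eq⟩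
  exact (convex_convexHull ℝ _).segment_subset h1 h2

lemma segment_subset_Q : segment ℝ Pplus Pminus ⊆ Q := by
  rintro P ⟨u, v, hu, hv, huv, rfl⟩
  exact subset_closure ⟨2, two_pos, mix_hasRealisation u v hu hv huv⟩

lemma segment_subset_NS : segment ℝ Pplus Pminus ⊆ NS := by
  rw [← face_NS_eq]; exact fun P hP => hP.1

lemma sup_eq_four {S : Set Behaviour} (hSN : S ⊆ NS) (h4 : Pplus ∈ S) :
    sSup (Bval '' S) = 4 :=
  IsGreatest.csSup_eq ⟨⟨Pplus, h4, Bval_Pplus⟩, by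
    rintro r ⟨P, hP, rfl⟩; exact Bval_le_four (hSN hP)⟩

lemma face_eq {S : Set Behaviour} (hSN : S ⊆ NS)
    (hseg : segment ℝ Pplus Pminus ⊆ S) :
    {P ∈ S | Bval P = sSup (Bval '' S)} = segment ℝ Pplus Pminus := by
  have h4 : Pplus ∈ S := hseg (left_mem_segment ℝ _ _)
  rw [sup_eq_four hSN h4]
  ext P
  constructor
  · rintro ⟨hS, hB⟩
    have : P ∈ {P ∈ NS | Bval P = 4} := ⟨hSN hS, hB⟩
    rwa [face_NS_eq] at this
  · intro hP
    refine ⟨hseg hP, ?_⟩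
    have : P ∈ {P ∈ NS | Bval P = 4} := face_NS_eq ▸ hP
    exact this.2

/-- **A Bell function of class (4d):** `β_L = β_Q = β_NS = 4` and the local,
quantum and no-signalling faces all coincide with the segment joining the two
deterministic points `P₊` and `P₋`. -/
theorem class_4d_face :
    sSup (Bval '' L) = 4 ∧ sSup (Bval '' Q) = 4 ∧ sSup (Bval '' NS) = 4 ∧
    {P ∈ L | Bval P = sSup (Bval '' L)} = segment ℝ Pplus Pminus ∧
    {P ∈ Q | Bval P = sSup (Bval '' Q)} = segment ℝ Pplus Pminus ∧
    {P ∈ NS | Bval P = sSup (Bval '' NS)} = segment ℝ Pplus Pminus := by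
  have hL : Pplus ∈ L := segment_subset_L (left_mem_segment ℝ _ _)
  have hQ : Pplus ∈ Q := segment_subset_Q (left_mem_segment ℝ _ _)
  exact ⟨sup_eq_four L_subset_NS hL, sup_eq_four Q_subset_NS hQ,
    sup_eq_four subset_rfl Pplus_mem_NS,
    face_eq L_subset_NS segment_subset_L,
    face_eq Q_subset_NS segment_subset_Q,
    face_eq subset_rfl segment_subset_NS⟩
end
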